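/- For every integer n ≥ 1 and every pattern pair p ∈ {(012,021), (110,012)}, the number of inversion sequences of length n avoiding both patterns of p equals 2^n − n, i.e. |I_n(p)| = 2^n − n. -/

import Mathlib

/-- An inversion sequence of length `n` (0-indexed): `e i ≤ i` for all `i`. -/
def InvSeq {n : ℕ} (e : Fin n → ℕ) : Prop := ∀ i : Fin n, e i ≤ (i : ℕ)

/-- `e` contains the pattern `p` (a word of nonnegative integers): there is a
strictly increasing choice of positions on which `e` is order-isomorphic to `p`. -/
def Contains {n : ℕ} (e : Fin n → ℕ) (p : List ℕ) : Prop :=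
  ∃ s : Fin p.length → Fin n, StrictMono s ∧
    ∀ a b : Fin p.length,
      (p.get a < p.get b ↔ e (s a) < e (s b)) ∧
      (p.get a = p.get b ↔ e (s a) = e (s b))

/-- `e` avoids the pattern `p`. -/
def Avoids {n : ℕ} (e : Fin n → ℕ) (p : List ℕ) : Prop := ¬ Contains e p

/-- The number of zero entries of `e`. -/
def zeroStat {n : ℕ} (e : Fin n → ℕ) : ℕ :=
  (Finset.univ.filter (fun i : Fin n => e i = 0)).card

/-- The number of distinct positive values among the entries of `e`. -/
def distStat {n : ℕ} (e : Fin n → ℕ) : ℕ :=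
  ((Finset.univ.image e).filter (fun v => 0 < v)).card

/-- The number of repeated entries of `e`: `n - dist e`. -/
def repStat {n : ℕ} (e : Fin n → ℕ) : ℕ := n - distStat e

/-- The number of saturated entries of `e` (1-indexed: `e_i = i - 1`). -/
def satuStat {n : ℕ} (e : Fin n → ℕ) : ℕ :=
  (Finset.univ.filter (fun i : Fin n => e i = (i : ℕ))).card


section InvProof
variable {n : ℕ}

def Rel3 (a b u v : ℕ) : Prop := (a < b ↔ u < v) ∧ (a = b ↔ u = v)

lemma contains_triple_iff (e : Fin n → ℕ) (x y z : ℕ) :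
    Contains e [x,y,z] ↔ ∃ i j k : Fin n, i < j ∧ j < k ∧
      Rel3 x y (e i) (e j) ∧ Rel3 x z (e i) (e k) ∧ Rel3 y z (e j) (e k) := by
  have hget : ∀ a : Fin ([x,y,z] : List ℕ).length,
      [x,y,z].get a = if (a:ℕ) = 0 then x else if (a:ℕ) = 1 then y else z := by
    intro a
    match a with
    | ⟨0,_⟩ => rfl
    | ⟨1,_⟩ => rfl
    | ⟨2,_⟩ => rfl
  constructor
  · rintro ⟨s, hs, h⟩
    have l3 : ([x,y,z] : List ℕ).length = 3 := rfl
    refine ⟨s ⟨0, by omega⟩, s ⟨1, by omega⟩, s ⟨2, by omega⟩,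
      hs (by simp [Fin.lt_def]), hs (by simp [Fin.lt_def]), ?_, ?_, ?_⟩
    · have := h ⟨0, by omega⟩ ⟨1, by omega⟩
      rw [hget, hget] at this; simpa [Rel3] using this
    · have := h ⟨0, by omega⟩ ⟨2, by omega⟩
      rw [hget, hget] at this; simpa [Rel3] using this
    · have := h ⟨1, by omega⟩ ⟨2, by omega⟩
      rw [hget, hget] at this; simpa [Rel3] using this
  · rintro ⟨i, j, k, hij, hjk, ⟨h1a, h1b⟩, ⟨h2a, h2b⟩, ⟨h3a, h3b⟩⟩
    refine ⟨fun a => if (a:ℕ) = 0 then i else if (a:ℕ) = 1 then j else k, ?_, ?_⟩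
    · intro a b hab
      have ha := a.2; have hb := b.2
      have hab' : (a:ℕ) < (b:ℕ) := hab
      have : ((a:ℕ) = 0 ∧ (b:ℕ) = 1) ∨ ((a:ℕ) = 0 ∧ (b:ℕ) = 2) ∨ ((a:ℕ) = 1 ∧ (b:ℕ) = 2) := by
        simp only [List.length] at ha hb; omega
      rcases this with ⟨h1, h2⟩ | ⟨h1, h2⟩ | ⟨h1, h2⟩ <;>
        simp only [h1, h2] <;> norm_num <;> [exact hij; exact hij.trans hjk; exact hjk]
    · intro a b
      have ha := a.2; have hb := b.2
      simp only [List.length] at ha hb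
      rw [hget, hget]
      have hva : (a:ℕ) = 0 ∨ (a:ℕ) = 1 ∨ (a:ℕ) = 2 := by omega
      have hvb : (b:ℕ) = 0 ∨ (b:ℕ) = 1 ∨ (b:ℕ) = 2 := by omega
      rcases hva with h1 | h1 | h1 <;> rcases hvb with h2 | h2 | h2 <;>
        simp only [h1, h2] <;> norm_num <;> constructor <;> omega


lemma contains_012_iff (e : Fin n → ℕ) :
    Contains e [0,1,2] ↔ ∃ i j k : Fin n, i < j ∧ j < k ∧ e i < e j ∧ e j < e k := by
  rw [contains_triple_iff]
  constructor
  · rintro ⟨i,j,k,hij,hjk,⟨a1,a2⟩,⟨b1,b2⟩,⟨c1,c2⟩⟩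
    exact ⟨i,j,k,hij,hjk, by omega, by omega⟩
  · rintro ⟨i,j,k,hij,hjk,h1,h2⟩
    exact ⟨i,j,k,hij,hjk, ⟨by omega, by omega⟩, ⟨by omega, by omega⟩, ⟨by omega, by omega⟩⟩

lemma contains_021_iff (e : Fin n → ℕ) :
    Contains e [0,2,1] ↔ ∃ i j k : Fin n, i < j ∧ j < k ∧ e i < e k ∧ e k < e j := by
  rw [contains_triple_iff]
  constructor
  · rintro ⟨i,j,k,hij,hjk,⟨a1,a2⟩,⟨b1,b2⟩,⟨c1,c2⟩⟩
    exact ⟨i,j,k,hij,hjk, by omega, by omega⟩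
  · rintro ⟨i,j,k,hij,hjk,h1,h2⟩
    exact ⟨i,j,k,hij,hjk, ⟨by omega, by omega⟩, ⟨by omega, by omega⟩, ⟨by omega, by omega⟩⟩

lemma contains_110_iff (e : Fin n → ℕ) :
    Contains e [1,1,0] ↔ ∃ i j k : Fin n, i < j ∧ j < k ∧ e i = e j ∧ e k < e j := by
  rw [contains_triple_iff]
  constructor
  · rintro ⟨i,j,k,hij,hjk,⟨a1,a2⟩,⟨b1,b2⟩,⟨c1,c2⟩⟩
    exact ⟨i,j,k,hij,hjk, by omega, by omega⟩
  · rintro ⟨i,j,k,hij,hjk,h1,h2⟩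
    exact ⟨i,j,k,hij,hjk, ⟨by omega, by omega⟩, ⟨by omega, by omega⟩, ⟨by omega, by omega⟩⟩

lemma e_zero {e : Fin n → ℕ} (hInv : InvSeq e) {i : Fin n} (hi : (i:ℕ) = 0) : e i = 0 := by
  have := hInv i; omega

lemma zero_lt {e : Fin n → ℕ} (hInv : InvSeq e) {i : Fin n} (hn : 0 < n) (hi : 0 < e i) :
    (⟨0, hn⟩ : Fin n) < i := by
  rcases Nat.eq_zero_or_pos (i:ℕ) with h | h
  · have := e_zero hInv h; omega
  · exact Fin.mk_lt_of_lt_val h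

lemma char1 (hn : 0 < n) (e : Fin n → ℕ) (hInv : InvSeq e) :
    (Avoids e [0,1,2] ∧ Avoids e [0,2,1]) ↔
      ∀ i j : Fin n, 0 < e i → 0 < e j → e i = e j := by
  constructor
  · rintro ⟨h1, h2⟩ i j hi hj
    by_contra hne
    rcases lt_trichotomy i j with hij | hij | hij
    · rcases Nat.lt_or_ge (e i) (e j) with h | h
      · exact h1 ((contains_012_iff e).2 ⟨⟨0,hn⟩, i, j, zero_lt hInv hn hi, hij,
          by rw [e_zero hInv rfl]; omega, h⟩)
      · exact h2 ((contains_021_iff e).2 ⟨⟨0,hn⟩, i, j, zero_lt hInv hn hi, hij,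
          by rw [e_zero hInv rfl]; omega, by omega⟩)
    · exact hne (by rw [hij])
    · rcases Nat.lt_or_ge (e j) (e i) with h | h
      · exact h1 ((contains_012_iff e).2 ⟨⟨0,hn⟩, j, i, zero_lt hInv hn hj, hij,
          by rw [e_zero hInv rfl]; omega, h⟩)
      · exact h2 ((contains_021_iff e).2 ⟨⟨0,hn⟩, j, i, zero_lt hInv hn hj, hij,
          by rw [e_zero hInv rfl]; omega, by omega⟩)
  · intro h
    constructor
    · intro hC
      obtain ⟨i,j,k,hij,hjk,h1,h2⟩ := (contains_012_iff e).1 hC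
      have := h j k (by omega) (by omega); omega
    · intro hC
      obtain ⟨i,j,k,hij,hjk,h1,h2⟩ := (contains_021_iff e).1 hC
      have := h j k (by omega) (by omega); omega

lemma char2 (hn : 0 < n) (e : Fin n → ℕ) (hInv : InvSeq e) :
    (Avoids e [1,1,0] ∧ Avoids e [0,1,2]) ↔
      ((∀ j k : Fin n, j < k → 0 < e j → e k ≤ e j) ∧
       (∀ i j k : Fin n, i < j → j < k → 0 < e i → e i = e j → e i ≤ e k)) := by
  constructor
  · rintro ⟨h110, h012⟩
    constructor
    · intro j k hjk hj
      by_contra h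
      exact h012 ((contains_012_iff e).2 ⟨⟨0,hn⟩, j, k, zero_lt hInv hn hj, hjk,
        by rw [e_zero hInv rfl]; omega, by omega⟩)
    · intro i j k hij hjk hi hej
      by_contra h
      exact h110 ((contains_110_iff e).2 ⟨i, j, k, hij, hjk, hej, by omega⟩)
  · rintro ⟨hc1, hc2⟩
    constructor
    · intro hC
      obtain ⟨i,j,k,hij,hjk,h1,h2⟩ := (contains_110_iff e).1 hC
      have := hc2 i j k hij hjk (by omega) h1; omega
    · intro hC
      obtain ⟨i,j,k,hij,hjk,h1,h2⟩ := (contains_012_iff e).1 hC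
      have := hc1 j k hjk (by omega); omega

def P1 (e : Fin n → ℕ) : Prop := InvSeq e ∧ ∀ i j : Fin n, 0 < e i → 0 < e j → e i = e j

/-- the minimum value of a finset of `Fin n`, as a natural number (0 if empty) -/
def mval (T : Finset (Fin n)) : ℕ := if h : T.Nonempty then ((T.min' h : Fin n) : ℕ) else 0

lemma mval_le {T : Finset (Fin n)} {x : Fin n} (hx : x ∈ T) : mval T ≤ (x:ℕ) := by
  rw [mval, dif_pos ⟨x, hx⟩]
  exact T.min'_le x hx

lemma mval_mem {T : Finset (Fin n)} (h : T.Nonempty) : ∃ x ∈ T, mval T = (x:ℕ) := by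
  rw [mval, dif_pos h]
  exact ⟨T.min' h, T.min'_mem h, rfl⟩

lemma mval_eq_min' {T : Finset (Fin n)} (h : T.Nonempty) : mval T = ((T.min' h : Fin n) : ℕ) := by
  rw [mval, dif_pos h]

def dec1 (T : Finset (Fin n)) : Fin n → ℕ :=
  fun i => if i ∈ T ∧ mval T < (i:ℕ) then mval T + 1 else 0

lemma dec1_P1 (T : Finset (Fin n)) : P1 (dec1 T) := by
  constructor
  · intro i
    unfold dec1
    split
    · next h => omega
    · omega
  · intro i j hi hj
    unfold dec1 at hi hj ⊢
    by_cases h1 : (i ∈ T ∧ mval T < (i:ℕ)) <;> by_cases h2 : (j ∈ T ∧ mval T < (j:ℕ)) <;>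
      simp [h1, h2] at hi hj ⊢

lemma dec1_pos_iff (T : Finset (Fin n)) (i : Fin n) :
    0 < dec1 T i ↔ (i ∈ T ∧ mval T < (i:ℕ)) := by
  unfold dec1; split
  · next h => simpa using h
  · next h => simpa using h

lemma dec1_val (T : Finset (Fin n)) (i : Fin n) (h : 0 < dec1 T i) :
    dec1 T i = mval T + 1 := by
  unfold dec1 at h ⊢
  split
  · rfl
  · next hc => rw [if_neg hc] at h; omega

lemma card_ne_one_cases (T : Finset (Fin n)) (hT : T.card ≠ 1) : T = ∅ ∨ 2 ≤ T.card := by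
  rcases Nat.lt_or_ge T.card 2 with h | h
  · left
    apply Finset.card_eq_zero.1
    omega
  · right; exact h

lemma dec1_mem_iff (T : Finset (Fin n)) (hT : T.card ≠ 1) (j : Fin n) :
    j ∈ T ↔ (0 < dec1 T j ∨ ∃ i, dec1 T i = (j:ℕ) + 1) := by
  rcases card_ne_one_cases T hT with rfl | hc
  · simp [dec1]
  · have hne : T.Nonempty := Finset.card_pos.1 (by omega)
    constructor
    · intro hj
      have hinf : mval T ≤ (j:ℕ) := mval_le hj
      rcases Nat.lt_or_ge (mval T) (j:ℕ) with h | h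
      · exact Or.inl ((dec1_pos_iff T j).2 ⟨hj, h⟩)
      · right
        refine ⟨T.max' hne, ?_⟩
        have hpos : 0 < dec1 T (T.max' hne) := by
          rw [dec1_pos_iff]
          refine ⟨T.max'_mem hne, ?_⟩
          rw [mval_eq_min' hne]
          exact_mod_cast T.min'_lt_max'_of_card (h₂ := hc)
        rw [dec1_val T _ hpos]
        omega
    · rintro (h | ⟨i, hi⟩)
      · exact ((dec1_pos_iff T j).1 h).1
      · have hpos : 0 < dec1 T i := by omega
        rw [dec1_val T i hpos] at hi
        have hj : (j:ℕ) = ((T.min' hne : Fin n) : ℕ) := by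
          rw [← mval_eq_min' hne]; omega
        have : j = T.min' hne := Fin.ext hj
        rw [this]; exact T.min'_mem hne

lemma dec1_inj' {T T' : Finset (Fin n)} (hT : T.card ≠ 1) (hT' : T'.card ≠ 1)
    (h : dec1 T = dec1 T') : T = T' := by
  ext j
  rw [dec1_mem_iff T hT j, dec1_mem_iff T' hT' j, h]

lemma dec1_surj (e : Fin n → ℕ) (he : P1 e) :
    ∃ T : Finset (Fin n), T.card ≠ 1 ∧ dec1 T = e := by
  obtain ⟨hInv, heq⟩ := he
  by_cases hz : ∀ i, e i = 0
  · refine ⟨∅, by simp, funext fun i => ?_⟩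
    simp [dec1, hz i]
  · push_neg at hz
    obtain ⟨i₀, hi₀⟩ := hz
    set v := e i₀ with hv
    have hv1 : 1 ≤ v := Nat.pos_of_ne_zero hi₀
    have hvn : v - 1 < n := by have := hInv i₀; have := i₀.2; omega
    set m : Fin n := ⟨v - 1, hvn⟩ with hm
    set S : Finset (Fin n) := Finset.univ.filter (fun i => 0 < e i) with hS
    have hSmem : ∀ i, i ∈ S ↔ 0 < e i := by intro i; simp [hS]
    have hval : ∀ i ∈ S, e i = v := by
      intro i hi
      exact heq i i₀ ((hSmem i).1 hi) (Nat.pos_of_ne_zero hi₀)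
    have hmv : (m:ℕ) = v - 1 := rfl
    have hmS : m ∉ S := by
      intro hmem
      have h1 := hval m hmem
      have h2 := hInv m
      omega
    have hgt : ∀ i ∈ S, (m:ℕ) < (i:ℕ) := by
      intro i hi
      have h1 := hval i hi
      have h2 := hInv i
      omega
    set T := insert m S with hT
    have hmm : m ∈ T := by rw [hT]; exact Finset.mem_insert_self m S
    have hinf : mval T = v - 1 := by
      have h1 : mval T ≤ v - 1 := by
        have := mval_le hmm
        omega
      obtain ⟨x, hxT, hxe⟩ := mval_mem (T := T) ⟨m, hmm⟩
      rw [hT] at hxT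
      rcases Finset.mem_insert.1 hxT with hxm | hx
      · rw [hxm] at hxe; omega
      · have := hgt x hx; omega
    refine ⟨T, ?_, funext fun i => ?_⟩
    · have hi₀S : i₀ ∈ S := (hSmem i₀).2 (Nat.pos_of_ne_zero hi₀)
      have h2 : 2 ≤ T.card := by
        rw [hT, Finset.card_insert_of_notMem hmS]
        have : 0 < S.card := Finset.card_pos.2 ⟨i₀, hi₀S⟩
        omega
      omega
    · unfold dec1
      rw [hinf]
      split
      · next h =>
        obtain ⟨hiT, hlt⟩ := h
        rw [hT] at hiT
        rcases Finset.mem_insert.1 hiT with hmi | hiS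
        · rw [hmi] at hlt; omega
        · rw [hval i hiS]; omega
      · next h =>
        push_neg at h
        by_cases hiT : i ∈ T
        · have hle := h hiT
          rw [hT] at hiT
          rcases Finset.mem_insert.1 hiT with hmi | hiS
          · by_contra hne
            have : 0 < e i := by omega
            exact hmS ((hSmem m).2 (by rw [← hmi]; omega))
          · have := hgt i hiS; omega
        · by_contra hne
          have : 0 < e i := by omega
          exact hiT (Finset.mem_insert_of_mem ((hSmem i).2 this))

lemma count_card_ne_one :
    Nat.card {T : Finset (Fin n) // T.card ≠ 1} = 2 ^ n - n := by
  rw [Nat.card_eq_fintype_card, Fintype.card_subtype]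
  have h1 : (Finset.univ.filter (fun T : Finset (Fin n) => T.card = 1)).card = n := by
    have himg : (Finset.univ.filter (fun T : Finset (Fin n) => T.card = 1)) =
        Finset.univ.image (fun i : Fin n => ({i} : Finset (Fin n))) := by
      ext T
      simp only [Finset.mem_filter, Finset.mem_univ, true_and, Finset.mem_image]
      rw [Finset.card_eq_one]
      aesop
    rw [himg, Finset.card_image_of_injective _ Finset.singleton_injective]
    simp
  have h2 := Finset.card_filter_add_card_filter_not
    (s := (Finset.univ : Finset (Finset (Fin n)))) (p := fun T => T.card = 1)
  have h3 : (Finset.univ : Finset (Finset (Fin n))).card = 2 ^ n := by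
    rw [Finset.card_univ, Fintype.card_finset, Fintype.card_fin]
  have h4 : n ≤ 2 ^ n := Nat.le_of_lt (Nat.lt_two_pow_self (n := n))
  simp only [ne_eq]
  omega

lemma count_P1 : Nat.card {e : Fin n → ℕ // P1 e} = 2 ^ n - n := by
  rw [← count_card_ne_one (n := n)]
  exact (Nat.card_eq_of_bijective
    (f := fun T : {T : Finset (Fin n) // T.card ≠ 1} => (⟨dec1 T.1, dec1_P1 T.1⟩ : {e // P1 e}))
    ⟨by
      rintro ⟨T, hT⟩ ⟨T', hT'⟩ h
      simp only [Subtype.mk.injEq] at h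
      exact Subtype.ext (dec1_inj' hT hT' h),
     by
      rintro ⟨e, he⟩
      obtain ⟨T, hT, hdec⟩ := dec1_surj e he
      exact ⟨⟨T, hT⟩, Subtype.ext hdec⟩⟩).symm


/-- rank of an element in a finset -/
def rnk (U : Finset (Fin n)) (i : Fin n) (h : i ∈ U) : Fin U.card :=
  (U.orderIsoOfFin rfl).symm ⟨i, h⟩

def emb (U : Finset (Fin n)) : Fin U.card ↪o Fin n := U.orderEmbOfFin rfl

lemma emb_rnk {U : Finset (Fin n)} {i : Fin n} (h : i ∈ U) : emb U (rnk U i h) = i := by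
  have h1 := (U.orderIsoOfFin rfl).apply_symm_apply ⟨i, h⟩
  have h2 := Finset.coe_orderIsoOfFin_apply U rfl (rnk U i h)
  show U.orderEmbOfFin rfl (rnk U i h) = i
  rw [← h2, rnk]
  exact congrArg Subtype.val h1

lemma emb_mem {U : Finset (Fin n)} (r : Fin U.card) : emb U r ∈ U :=
  Finset.orderEmbOfFin_mem U rfl r

lemma rnk_emb {U : Finset (Fin n)} (r : Fin U.card) : rnk U (emb U r) (emb_mem r) = r := by
  rw [rnk]
  have : (⟨emb U r, emb_mem r⟩ : {x // x ∈ U}) = (U.orderIsoOfFin rfl) r :=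
    Subtype.ext (Finset.coe_orderIsoOfFin_apply U rfl r).symm
  rw [this, OrderIso.symm_apply_apply]

lemma rnk_lt_rnk {U : Finset (Fin n)} {i j : Fin n} (hi : i ∈ U) (hj : j ∈ U) (hij : i < j) :
    rnk U i hi < rnk U j hj := by
  rw [rnk, rnk]
  rw [OrderIso.lt_iff_lt]
  exact hij

lemma emb_lt_emb {U : Finset (Fin n)} {a b : Fin U.card} (h : a < b) : emb U a < emb U b :=
  (U.orderEmbOfFin rfl).strictMono h

def decS (U : Finset (Fin n)) : Fin n → ℕ := fun i =>
  if h : i ∈ U then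
    if U.card ≤ 2 * (rnk U i h : ℕ) + 1
    then ((emb U ⟨U.card - 1 - (rnk U i h : ℕ), by have := (rnk U i h).2; omega⟩ : Fin n) : ℕ)
    else 0
  else 0

lemma decS_of_not_mem {U : Finset (Fin n)} {i : Fin n} (h : i ∉ U) : decS U i = 0 := by
  rw [decS, dif_neg h]

lemma decS_val {U : Finset (Fin n)} {i : Fin n} (h : i ∈ U)
    (hc : U.card ≤ 2 * (rnk U i h : ℕ) + 1) :
    decS U i = ((emb U ⟨U.card - 1 - (rnk U i h : ℕ),
      by have := (rnk U i h).2; omega⟩ : Fin n) : ℕ) := by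
  rw [decS, dif_pos h, if_pos hc]

lemma decS_zero_of_cond {U : Finset (Fin n)} {i : Fin n} (h : i ∈ U)
    (hc : ¬ U.card ≤ 2 * (rnk U i h : ℕ) + 1) : decS U i = 0 := by
  rw [decS, dif_pos h, if_neg hc]

lemma decS_le {U : Finset (Fin n)} (i : Fin n) : decS U i ≤ (i : ℕ) := by
  rw [decS]
  split
  · next h =>
    split
    · next hc =>
      set r := rnk U i h with hr
      have hrlt := r.2
      have hle : (⟨U.card - 1 - (r:ℕ), by omega⟩ : Fin U.card) ≤ r := by
        rw [Fin.le_def]; simp; omega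
      have := (emb U).monotone hle
      calc ((emb U ⟨U.card - 1 - (r:ℕ), by omega⟩ : Fin n) : ℕ)
          ≤ ((emb U r : Fin n) : ℕ) := this
        _ = (i : ℕ) := by rw [hr, emb_rnk h]
    · omega
  · omega

variable {U : Finset (Fin n)}

lemma decS_pos_iff (hU : ∀ x ∈ U, 0 < (x:ℕ)) (i : Fin n) :
    0 < decS U i ↔ ∃ h : i ∈ U, U.card ≤ 2 * (rnk U i h : ℕ) + 1 := by
  constructor
  · intro hpos
    rw [decS] at hpos
    split at hpos
    · next h =>
      split at hpos
      · next hc => exact ⟨h, hc⟩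
      · omega
    · omega
  · rintro ⟨h, hc⟩
    rw [decS_val h hc]
    exact hU _ (emb_mem _)

lemma decS_anti (hU : ∀ x ∈ U, 0 < (x:ℕ)) {i j : Fin n} (hij : i < j)
    (hi : 0 < decS U i) (hj : 0 < decS U j) : decS U j < decS U i := by
  obtain ⟨hmi, hci⟩ := (decS_pos_iff hU i).1 hi
  obtain ⟨hmj, hcj⟩ := (decS_pos_iff hU j).1 hj
  rw [decS_val hmi hci, decS_val hmj hcj]
  have hr := rnk_lt_rnk hmi hmj hij
  have h2i := (rnk U i hmi).2
  have h2j := (rnk U j hmj).2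
  have : (⟨U.card - 1 - (rnk U j hmj : ℕ), by omega⟩ : Fin U.card)
      < ⟨U.card - 1 - (rnk U i hmi : ℕ), by omega⟩ := by
    rw [Fin.lt_def]
    simp only
    rw [Fin.lt_def] at hr
    omega
  exact_mod_cast emb_lt_emb this

lemma decS_val_mem {i : Fin n} (h : 0 < decS U i) : ∃ x ∈ U, decS U i = (x:ℕ) := by
  rw [decS] at h ⊢
  split at h
  · next hm =>
    split at h
    · next hc =>
      rw [dif_pos hm, if_pos hc]
      exact ⟨_, emb_mem _, rfl⟩
    · omega
  · omega

lemma decS_mem_of_pos {i : Fin n} (h : 0 < decS U i) : i ∈ U := by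
  rw [decS] at h
  split at h
  · next hm => exact hm
  · omega

lemma decS_cover (hU : ∀ x ∈ U, 0 < (x:ℕ)) {x : Fin n} (hx : x ∈ U) :
    0 < decS U x ∨ ∃ i, decS U i = (x:ℕ) := by
  set r := rnk U x hx with hrdef
  have hr2 := r.2
  by_cases hc : U.card ≤ 2 * (r:ℕ) + 1
  · exact Or.inl ((decS_pos_iff hU x).2 ⟨hx, hc⟩)
  · right
    push_neg at hc
    set r' : Fin U.card := ⟨U.card - 1 - (r:ℕ), by omega⟩ with hr'
    refine ⟨emb U r', ?_⟩
    have hm : emb U r' ∈ U := emb_mem r'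
    have hrnk : rnk U (emb U r') hm = r' := rnk_emb r'
    have hc' : U.card ≤ 2 * ((rnk U (emb U r') hm : ℕ)) + 1 := by
      rw [hrnk, hr']
      simp only
      omega
    rw [decS_val hm hc']
    have : (⟨U.card - 1 - (rnk U (emb U r') hm : ℕ), by
        have := (rnk U (emb U r') hm).2; omega⟩ : Fin U.card) = r := by
      apply Fin.ext
      simp only [hrnk]
      simp only [hr']
      omega
    rw [this, hrdef, emb_rnk hx]


open Classical in
/-- positions of positive entries together with the positive values, as a finset of `Fin n` -/
noncomputable def encI (e : Fin n → ℕ) : Finset (Fin n) :=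
  Finset.univ.filter (fun x => 0 < e x ∨ (0 < (x:ℕ) ∧ ∃ i, e i = (x:ℕ)))

lemma encI_mem (e : Fin n → ℕ) (x : Fin n) :
    x ∈ encI e ↔ 0 < e x ∨ (0 < (x:ℕ) ∧ ∃ i, e i = (x:ℕ)) := by
  simp [encI]

/-- "strict nice": an inversion sequence whose positive entries are strictly decreasing -/
def SNice (e : Fin n → ℕ) : Prop :=
  (∀ i : Fin n, e i ≤ (i:ℕ)) ∧ (∀ i j : Fin n, i < j → 0 < e i → 0 < e j → e j < e i)

lemma encI_pos (e : Fin n → ℕ) (he : ∀ i : Fin n, e i ≤ (i:ℕ)) :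
    ∀ x ∈ encI e, 0 < (x:ℕ) := by
  intro x hx
  rw [encI_mem] at hx
  rcases hx with h | ⟨h, _⟩
  · have := he x; omega
  · exact h

lemma decS_SNice (U : Finset (Fin n)) (hU : ∀ x ∈ U, 0 < (x:ℕ)) : SNice (decS U) :=
  ⟨decS_le, fun _ _ hij hi hj => decS_anti hU hij hi hj⟩

lemma encI_decS (U : Finset (Fin n)) (hU : ∀ x ∈ U, 0 < (x:ℕ)) : encI (decS U) = U := by
  ext x
  rw [encI_mem]
  constructor
  · rintro (h | ⟨hx, i, hi⟩)
    · exact decS_mem_of_pos h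
    · obtain ⟨y, hy, hvy⟩ := decS_val_mem (i := i) (by rw [hi]; exact hx)
      have : x = y := Fin.ext (by omega)
      rw [this]; exact hy
  · intro hx
    rcases decS_cover hU hx with h | ⟨i, hi⟩
    · exact Or.inl h
    · exact Or.inr ⟨hU x hx, i, hi⟩

/-! ### structural lemmas for SNice sequences -/


lemma encI_empty_iff (e : Fin n → ℕ) (he0 : ∀ i : Fin n, e i ≤ (i:ℕ)) :
    encI e = ∅ ↔ ∀ i, e i = 0 := by
  constructor
  · intro h i
    by_contra hne
    have : i ∈ encI e := (encI_mem e i).2 (Or.inl (by omega))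
    rw [h] at this
    simp at this
  · intro h
    ext x
    simp only [encI_mem, h, Finset.notMem_empty, iff_false]
    rintro (h0 | ⟨hx, i, hi⟩) <;> omega


lemma encI_le_p {e : Fin n → ℕ} (he : SNice e) {p : Fin n}
    (hp : p ∈ Finset.univ.filter (fun i => 0 < e i))
    (hpmax : ∀ x ∈ Finset.univ.filter (fun i : Fin n => 0 < e i), x ≤ p) :
    ∀ x ∈ encI e, x ≤ p := by
  intro x hx
  rw [encI_mem] at hx
  rcases hx with h | ⟨hx, i, hi⟩
  · exact hpmax x (by simp [h])
  · have h1 : 0 < e i := by omega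
    have h2 : i ≤ p := hpmax i (by simp [h1])
    have h3 := he.1 i
    rw [Fin.le_def] at h2 ⊢
    omega

lemma p_mem_encI {e : Fin n → ℕ} {p : Fin n}
    (hp : p ∈ Finset.univ.filter (fun i => 0 < e i)) : p ∈ encI e := by
  rw [encI_mem]
  simp only [Finset.mem_filter] at hp
  exact Or.inl hp.2

lemma ep_pos {e : Fin n → ℕ} {p : Fin n}
    (hp : p ∈ Finset.univ.filter (fun i => 0 < e i)) : 0 < e p := by
  simp only [Finset.mem_filter] at hp
  exact hp.2

lemma epFin_mem_encI {e : Fin n → ℕ} (he : SNice e) {p : Fin n}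
    (hp : p ∈ Finset.univ.filter (fun i => 0 < e i)) :
    (⟨e p, by exact lt_of_le_of_lt (he.1 p) p.2⟩ : Fin n) ∈ encI e := by
  rw [encI_mem]
  right
  refine ⟨?_, p, rfl⟩
  simp only
  exact ep_pos hp

lemma ep_le_encI {e : Fin n → ℕ} (he : SNice e) {p : Fin n}
    (hp : p ∈ Finset.univ.filter (fun i => 0 < e i))
    (hpmax : ∀ x ∈ Finset.univ.filter (fun i : Fin n => 0 < e i), x ≤ p) :
    ∀ x ∈ encI e, e p ≤ (x:ℕ) := by
  intro x hx
  rw [encI_mem] at hx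
  have hpp := ep_pos hp
  rcases hx with h | ⟨hx, i, hi⟩
  · have hxp : x ≤ p := hpmax x (by simp [h])
    have hx1 := he.1 x
    rcases eq_or_lt_of_le hxp with rfl | hlt
    · omega
    · have := he.2 x p hlt h hpp
      omega
  · have h1 : 0 < e i := by omega
    have hip : i ≤ p := hpmax i (by simp [h1])
    rcases eq_or_lt_of_le hip with rfl | hlt
    · omega
    · have := he.2 i p hlt h1 hpp
      omega

/-- positive values are injective on positions -/
lemma val_inj {e : Fin n → ℕ} (he : SNice e) {i j : Fin n}
    (hi : 0 < e i) (hj : 0 < e j) (hij : i ≠ j) (hv : e i = e j) : False := by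
  rcases lt_or_gt_of_ne hij with h | h
  · have := he.2 i j h hi hj; omega
  · have := he.2 j i h hj hi; omega

/-- if `e p` occurs as a positive entry position, it must be `p` itself -/
lemma ep_pos_position {e : Fin n → ℕ} (he : SNice e) {p : Fin n}
    (hp : p ∈ Finset.univ.filter (fun i => 0 < e i))
    (hpmax : ∀ x ∈ Finset.univ.filter (fun i : Fin n => 0 < e i), x ≤ p)
    {q : Fin n} (hq : (q : ℕ) = e p) (hpos : 0 < e q) : q = p := by
  by_contra hne
  have hqp : q ≤ p := hpmax q (by simp [hpos])
  have hlt : q < p := lt_of_le_of_ne hqp hne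
  have h1 := he.2 q p hlt hpos (ep_pos hp)
  have h2 := he.1 q
  omega

/-- a value equal to `p` can only be at position p with e p = p -/
lemma p_as_value {e : Fin n → ℕ} (he : SNice e) {p : Fin n}
    (hpmax : ∀ x ∈ Finset.univ.filter (fun i : Fin n => 0 < e i), x ≤ p)
    {i : Fin n} (hi : e i = (p:ℕ)) (hpos : 0 < e i) : i = p := by
  have h2 := he.1 i
  have h3 : i ≤ p := hpmax i (by simp [hpos])
  rw [Fin.le_def] at h3
  exact Fin.ext (by omega)

lemma snice_update {e : Fin n → ℕ} (he : SNice e) (p : Fin n) :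
    SNice (Function.update e p 0) := by
  constructor
  · intro i
    rcases eq_or_ne i p with rfl | hne
    · simp
    · rw [Function.update_of_ne hne]; exact he.1 i
  · intro i j hij hi hj
    rcases eq_or_ne i p with rfl | hne
    · simp at hi
    · rcases eq_or_ne j p with rfl | hne'
      · simp at hj
      · rw [Function.update_of_ne hne] at hi ⊢
        rw [Function.update_of_ne hne'] at hj ⊢
        exact he.2 i j hij hi hj

lemma encI_update {e : Fin n → ℕ} (he : SNice e) {p : Fin n}
    (hp : p ∈ Finset.univ.filter (fun i => 0 < e i))
    (hpmax : ∀ x ∈ Finset.univ.filter (fun i : Fin n => 0 < e i), x ≤ p) :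
    encI (Function.update e p 0) =
      ((encI e).erase p).erase ⟨e p, lt_of_le_of_lt (he.1 p) p.2⟩ := by
  have hppos : 0 < e p := by simpa using hp
  set q : Fin n := ⟨e p, lt_of_le_of_lt (he.1 p) p.2⟩ with hq
  have hqval : (q:ℕ) = e p := rfl
  ext x
  rw [Finset.mem_erase, Finset.mem_erase, encI_mem, encI_mem]
  constructor
  · rintro (hpos | ⟨hx, i, hi⟩)
    · -- x has positive e' value
      have hxp : x ≠ p := by
        intro h; rw [h] at hpos; simp at hpos
      rw [Function.update_of_ne hxp] at hpos
      refine ⟨?_, hxp, Or.inl hpos⟩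
      -- x ≠ q
      intro hxq
      have : x = p := ep_pos_position he hp hpmax (by rw [hxq]) hpos
      exact hxp this
    · -- x is a positive value of e'
      have hip : i ≠ p := by
        intro h; rw [h] at hi; simp at hi; omega
      rw [Function.update_of_ne hip] at hi
      have hipos : 0 < e i := by omega
      constructor
      · -- x ≠ q : else e i = e p with i ≠ p
        intro hxq
        rw [hxq] at hi
        exact val_inj he hipos hppos hip (by omega)
      refine ⟨?_, Or.inr ⟨hx, i, hi⟩⟩
      -- x ≠ p : else e i = p forces i = p
      intro hxp
      rw [hxp] at hi
      exact hip (p_as_value he hpmax hi hipos)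
  · rintro ⟨hxq, hxp, hmem | ⟨hx, i, hi⟩⟩
    · left
      rw [Function.update_of_ne hxp]
      exact hmem
    · right
      refine ⟨hx, i, ?_⟩
      have hip : i ≠ p := by
        intro h
        rw [h] at hi
        exact hxq (Fin.ext (by omega))
      rw [Function.update_of_ne hip]
      exact hi

lemma snice_unique (N : ℕ) : ∀ e f : Fin n → ℕ, SNice e → SNice f →
    encI e = encI f → (encI e).card ≤ N → e = f := by
  induction N with
  | zero =>
    intro e f he hf hef hcard
    have h1 : encI e = ∅ := Finset.card_eq_zero.1 (by omega)
    have h2 : encI f = ∅ := by rw [← hef]; exact h1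
    funext i
    rw [(encI_empty_iff e he.1).1 h1 i, (encI_empty_iff f hf.1).1 h2 i]
  | succ N ih =>
    intro e f he hf hef hcard
    by_cases hE : encI e = ∅
    · have h2 : encI f = ∅ := by rw [← hef]; exact hE
      funext i
      rw [(encI_empty_iff e he.1).1 hE i, (encI_empty_iff f hf.1).1 h2 i]
    · -- positive supports nonempty
      have hPe : (Finset.univ.filter (fun i : Fin n => 0 < e i)).Nonempty := by
        by_contra h
        rw [Finset.not_nonempty_iff_eq_empty] at h
        apply hE
        rw [encI_empty_iff e he.1]
        intro i
        by_contra hne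
        have : i ∈ Finset.univ.filter (fun i : Fin n => 0 < e i) := by
          simp; omega
        rw [h] at this; simp at this
      have hPf : (Finset.univ.filter (fun i : Fin n => 0 < f i)).Nonempty := by
        by_contra h
        rw [Finset.not_nonempty_iff_eq_empty] at h
        apply hE
        rw [hef, encI_empty_iff f hf.1]
        intro i
        by_contra hne
        have : i ∈ Finset.univ.filter (fun i : Fin n => 0 < f i) := by
          simp; omega
        rw [h] at this; simp at this
      obtain ⟨pe, hpe_mem, hpe_max⟩ : ∃ p, p ∈ Finset.univ.filter (fun i : Fin n => 0 < e i) ∧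
          ∀ x ∈ Finset.univ.filter (fun i : Fin n => 0 < e i), x ≤ p :=
        ⟨_, Finset.max'_mem _ hPe, fun x hx => Finset.le_max' _ x hx⟩
      obtain ⟨pf, hpf_mem, hpf_max⟩ : ∃ p, p ∈ Finset.univ.filter (fun i : Fin n => 0 < f i) ∧
          ∀ x ∈ Finset.univ.filter (fun i : Fin n => 0 < f i), x ≤ p :=
        ⟨_, Finset.max'_mem _ hPf, fun x hx => Finset.le_max' _ x hx⟩
      -- pe = pf
      have hppe : pe = pf := by
        have h1 : pe ∈ encI f := by rw [← hef]; exact p_mem_encI hpe_mem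
        have h2 : pf ∈ encI e := by rw [hef]; exact p_mem_encI hpf_mem
        have h3 : pe ≤ pf := encI_le_p hf hpf_mem hpf_max pe h1
        have h4 : pf ≤ pe := encI_le_p he hpe_mem hpe_max pf h2
        exact le_antisymm h3 h4
      -- e pe = f pf
      have hval : e pe = f pf := by
        have h1 : (⟨e pe, lt_of_le_of_lt (he.1 pe) pe.2⟩ : Fin n) ∈ encI f := by
          rw [← hef]; exact epFin_mem_encI he hpe_mem
        have h2 : (⟨f pf, lt_of_le_of_lt (hf.1 pf) pf.2⟩ : Fin n) ∈ encI e := by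
          rw [hef]; exact epFin_mem_encI hf hpf_mem
        have h3 := ep_le_encI hf hpf_mem hpf_max _ h1
        have h4 := ep_le_encI he hpe_mem hpe_max _ h2
        simp only [Fin.val_mk] at h3 h4
        omega
      -- peel
      set e' := Function.update e pe 0 with he'
      set f' := Function.update f pf 0 with hf'
      have hee' : encI e' = ((encI e).erase pe).erase ⟨e pe, lt_of_le_of_lt (he.1 pe) pe.2⟩ :=
        encI_update he hpe_mem hpe_max
      have hff' : encI f' = ((encI f).erase pf).erase ⟨f pf, lt_of_le_of_lt (hf.1 pf) pf.2⟩ :=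
        encI_update hf hpf_mem hpf_max
      have henc : encI e' = encI f' := by
        rw [hee', hff', hef, hppe]
        congr 1
        exact Fin.ext (by simp only; rw [← hval, hppe])
      have hcard' : (encI e').card ≤ N := by
        rw [hee']
        have h1 : ((encI e).erase pe).card < (encI e).card :=
          Finset.card_erase_lt_of_mem (p_mem_encI hpe_mem)
        have h2 := Finset.card_erase_le
          (s := (encI e).erase pe) (a := (⟨e pe, lt_of_le_of_lt (he.1 pe) pe.2⟩ : Fin n))
        omega
      have heq' : e' = f' := ih e' f' (snice_update he pe) (snice_update hf pf) henc hcard'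
      funext i
      rcases eq_or_ne i pe with rfl | hne
      · rw [hval, hppe]
      · have h1 : e i = e' i := by rw [he', Function.update_of_ne hne]
        have h2 : f i = f' i := by
          rw [hf', Function.update_of_ne (by rw [← hppe]; exact hne)]
        rw [h1, h2, heq']


lemma decS_encI {e : Fin n → ℕ} (he : SNice e) : decS (encI e) = e := by
  have hpos := encI_pos e he.1
  exact snice_unique (encI (decS (encI e))).card (decS (encI e)) e
    (decS_SNice _ hpos) he (by rw [encI_decS _ hpos]) le_rfl


/-- value of decS at the maximum element: the minimum element -/
lemma decS_max (U : Finset (Fin n)) (h : U.Nonempty) :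
    decS U (U.max' h) = mval U := by
  have hm : U.max' h ∈ U := U.max'_mem h
  have hcard : 0 < U.card := Finset.card_pos.2 h
  have hlast : emb U ⟨U.card - 1, by omega⟩ = U.max' h :=
    Finset.orderEmbOfFin_last rfl hcard
  have hr : rnk U (U.max' h) hm = ⟨U.card - 1, by omega⟩ := by
    apply (emb U).injective
    rw [emb_rnk, hlast]
  have hc : U.card ≤ 2 * (rnk U (U.max' h) hm : ℕ) + 1 := by
    rw [hr]; simp; omega
  rw [decS_val hm hc]
  have hzero : emb U ⟨0, hcard⟩ = U.min' h := Finset.orderEmbOfFin_zero rfl hcard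
  have hmv : mval U = ((U.min' h : Fin n) : ℕ) := dif_pos h
  rw [hmv, ← hzero]
  exact congrArg (fun r => ((emb U r : Fin n) : ℕ)) (Fin.ext (by simp [hr]))

/-! ### the pattern class for (110, 012) -/

def P2 (e : Fin n → ℕ) : Prop :=
  (∀ i : Fin n, e i ≤ (i:ℕ)) ∧
  (∀ j k : Fin n, j < k → 0 < e j → e k ≤ e j) ∧
  (∀ i j k : Fin n, i < j → j < k → 0 < e i → e i = e j → e i ≤ e k)

def hasRep (e : Fin n → ℕ) : Prop := ∃ a b : Fin n, a < b ∧ 0 < e a ∧ e a = e b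

lemma snice_P2 {e : Fin n → ℕ} (he : SNice e) : P2 e := by
  refine ⟨he.1, ?_, ?_⟩
  · intro j k hjk hj
    rcases Nat.eq_zero_or_pos (e k) with h | h
    · omega
    · have := he.2 j k hjk hj h; omega
  · intro i j k hij hjk hi hv
    exact absurd hv (fun hv => val_inj he hi (by omega) (ne_of_lt hij) hv)

lemma snice_not_hasRep {e : Fin n → ℕ} (he : SNice e) : ¬ hasRep e := by
  rintro ⟨a, b, hab, ha, hv⟩
  exact val_inj he ha (by omega) (ne_of_lt hab) hv

lemma p2_snice_of_not_rep {e : Fin n → ℕ} (he : P2 e) (hr : ¬ hasRep e) : SNice e := by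
  refine ⟨he.1, ?_⟩
  intro i j hij hi hj
  have h1 := he.2.1 i j hij hi
  rcases eq_or_lt_of_le h1 with h | h
  · exact absurd ⟨i, j, hij, hi, h.symm⟩ hr
  · exact h

noncomputable def Mval (T : Finset (Fin n)) : ℕ :=
  if h : T.Nonempty then ((T.max' h : Fin n) : ℕ) else 0

lemma le_Mval {T : Finset (Fin n)} {x : Fin n} (hx : x ∈ T) : (x:ℕ) ≤ Mval T := by
  rw [Mval, dif_pos ⟨x, hx⟩]
  exact T.le_max' x hx

lemma Mval_mem {T : Finset (Fin n)} (h : T.Nonempty) : ∃ x ∈ T, Mval T = (x:ℕ) := by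
  rw [Mval, dif_pos h]
  exact ⟨T.max' h, T.max'_mem h, rfl⟩

open Classical in
noncomputable def dec2 (T : Finset (Fin n)) : Fin n → ℕ := fun i =>
  if (∃ x ∈ T, (x:ℕ) = 0) then decS (T.filter (fun x : Fin n => 0 < (x:ℕ))) i
  else if (i:ℕ) < Mval T then decS (T.filter (fun x : Fin n => (x:ℕ) < Mval T)) i
  else mval (T.filter (fun x : Fin n => (x:ℕ) < Mval T))

open Classical in
noncomputable def repS (hn : 0 < n) (e : Fin n → ℕ) : Fin n :=
  if h : (Finset.univ.filter (fun b : Fin n => ∃ a, a < b ∧ 0 < e a ∧ e a = e b)).Nonempty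
  then (Finset.univ.filter (fun b : Fin n => ∃ a, a < b ∧ 0 < e a ∧ e a = e b)).min' h
  else ⟨0, hn⟩

open Classical in
noncomputable def enc2 (hn : 0 < n) (e : Fin n → ℕ) : Finset (Fin n) :=
  if hasRep e
  then insert (repS hn e) (encI (fun i => if (i:ℕ) < ((repS hn e : Fin n) : ℕ) then e i else 0))
  else insert ⟨0, hn⟩ (encI e)

def D2P (T : Finset (Fin n)) : Prop := (∃ x ∈ T, (x:ℕ) = 0) ∨ 2 ≤ T.card

/-! ### facts about repS for a repeated P2 sequence -/

lemma repS_spec (hn : 0 < n) {e : Fin n → ℕ} (hr : hasRep e) :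
    (∃ a, a < repS hn e ∧ 0 < e a ∧ e a = e (repS hn e)) ∧
    (∀ b, b < repS hn e → ¬∃ a, a < b ∧ 0 < e a ∧ e a = e b) := by
  obtain ⟨a, b, hab, ha, hv⟩ := hr
  have hne : (Finset.univ.filter (fun b : Fin n => ∃ a, a < b ∧ 0 < e a ∧ e a = e b)).Nonempty :=
    ⟨b, by simp; exact ⟨a, hab, ha, hv⟩⟩
  rw [repS, dif_pos hne]
  constructor
  · have := Finset.min'_mem _ hne
    simpa using this
  · intro b' hb' hex
    have : (Finset.univ.filter (fun b : Fin n => ∃ a, a < b ∧ 0 < e a ∧ e a = e b)).min' hne ≤ b' :=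
      Finset.min'_le _ b' (by simpa using hex)
    exact absurd hb' (not_lt.2 this)

/-- everything from the repeat position on is constant -/
lemma rep_tail (hn : 0 < n) {e : Fin n → ℕ} (he : P2 e) (hr : hasRep e) :
    ∀ j, repS hn e ≤ j → e j = e (repS hn e) := by
  obtain ⟨⟨a, has, hapos, hav⟩, _⟩ := repS_spec hn hr
  intro j hj
  rcases eq_or_lt_of_le hj with h | h
  · rw [← h]
  · have hspos : 0 < e (repS hn e) := by omega
    have h1 : e j ≤ e (repS hn e) := he.2.1 _ j h hspos
    have h2 : e a ≤ e j := he.2.2 a (repS hn e) j has h (by omega) hav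
    omega




/-- the truncation of `e` before the repeat position -/
noncomputable def trunc (hn : 0 < n) (e : Fin n → ℕ) : Fin n → ℕ :=
  fun i => if (i:ℕ) < ((repS hn e : Fin n) : ℕ) then e i else 0

lemma trunc_snice (hn : 0 < n) {e : Fin n → ℕ} (he : P2 e) (hr : hasRep e) :
    SNice (trunc hn e) := by
  obtain ⟨_, hmin⟩ := repS_spec hn hr
  refine ⟨?_, ?_⟩
  · intro i
    rw [trunc]; split
    · exact he.1 i
    · omega
  · intro i j hij hi hj
    simp only [trunc] at hi hj ⊢
    split at hi
    case isFalse => omega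
    case isTrue hi' =>
    split at hj
    case isFalse => omega
    case isTrue hj' =>
    rw [if_pos hj', if_pos hi']
    have h1 := he.2.1 i j hij hi
    rcases eq_or_lt_of_le h1 with h | h
    · exfalso
      exact hmin j (by rw [Fin.lt_def]; exact hj') ⟨i, hij, hi, h.symm⟩
    · exact h

/-- between the first witness `a` and the repeat position everything vanishes -/
lemma rep_gap (hn : 0 < n) {e : Fin n → ℕ} (he : P2 e) (hr : hasRep e)
    {a : Fin n} (ha : a < repS hn e) (hapos : 0 < e a) (hav : e a = e (repS hn e))
    {i : Fin n} (hai : a < i) (his : i < repS hn e) : e i = 0 := by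
  obtain ⟨_, hmin⟩ := repS_spec hn hr
  by_contra hne
  have hipos : 0 < e i := by omega
  have h1 : e i ≤ e a := he.2.1 a i hai hapos
  rcases eq_or_lt_of_le h1 with h | h
  · exact hmin i his ⟨a, hai, hapos, h.symm⟩
  · -- 0 < e i < e a = e (repS) contradicts C1' at (i, repS)
    have h2 := he.2.1 i (repS hn e) his hipos
    omega

/-- the witness position is the maximum positive position of the truncation -/
lemma rep_witness_max (hn : 0 < n) {e : Fin n → ℕ} (he : P2 e) (hr : hasRep e)
    {a : Fin n} (ha : a < repS hn e) (hapos : 0 < e a) (hav : e a = e (repS hn e)) :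
    a ∈ Finset.univ.filter (fun i => 0 < trunc hn e i) ∧
    ∀ x ∈ Finset.univ.filter (fun i : Fin n => 0 < trunc hn e i), x ≤ a := by
  constructor
  · simp only [Finset.mem_filter, Finset.mem_univ, true_and]
    simp only [trunc]
    rw [if_pos (by rw [Fin.lt_def] at ha; exact ha)]
    exact hapos
  · intro x hx
    simp only [Finset.mem_filter, Finset.mem_univ, true_and] at hx
    simp only [trunc] at hx
    split at hx
    case isFalse => omega
    case isTrue hx' =>
    by_contra hlt
    push_neg at hlt
    have := rep_gap hn he hr ha hapos hav hlt (by rw [Fin.lt_def]; exact hx')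
    omega



lemma mval_encI {e : Fin n → ℕ} (he : SNice e) {p : Fin n}
    (hp : p ∈ Finset.univ.filter (fun i => 0 < e i))
    (hpmax : ∀ x ∈ Finset.univ.filter (fun i : Fin n => 0 < e i), x ≤ p) :
    mval (encI e) = e p := by
  have h1 := epFin_mem_encI he hp
  have h2 := ep_le_encI he hp hpmax
  have h3 : mval (encI e) ≤ e p := mval_le h1
  obtain ⟨x0, hx0, hmv⟩ := mval_mem (T := encI e) ⟨_, h1⟩
  have := h2 x0 hx0
  omega

lemma enc2_D2P (hn : 0 < n) {e : Fin n → ℕ} (he : P2 e) : D2P (enc2 hn e) := by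
  rw [enc2]
  by_cases hr : hasRep e
  · rw [if_pos hr]
    right
    obtain ⟨⟨a, has, hapos, hav⟩, _⟩ := repS_spec hn hr
    obtain ⟨haP, hamax⟩ := rep_witness_max hn he hr has hapos hav
    have haU : a ∈ encI (trunc hn e) := p_mem_encI haP
    have hsU : repS hn e ∉ encI (trunc hn e) := by
      intro hs
      have := encI_le_p (trunc_snice hn he hr) haP hamax _ hs
      exact absurd has (not_lt.2 this)
    rw [show (fun i : Fin n => if (i:ℕ) < ((repS hn e : Fin n) : ℕ) then e i else 0) = trunc hn e
      from rfl]
    rw [Finset.card_insert_of_notMem hsU]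
    have : 0 < (encI (trunc hn e)).card := Finset.card_pos.2 ⟨a, haU⟩
    omega
  · rw [if_neg hr]
    exact Or.inl ⟨⟨0, hn⟩, Finset.mem_insert_self _ _, rfl⟩

lemma dec2_enc2 (hn : 0 < n) {e : Fin n → ℕ} (he : P2 e) : dec2 (enc2 hn e) = e := by
  by_cases hr : hasRep e
  · -- repeated case
    obtain ⟨⟨a, has, hapos, hav⟩, _⟩ := repS_spec hn hr
    obtain ⟨haP, hamax⟩ := rep_witness_max hn he hr has hapos hav
    have hsnice := trunc_snice hn he hr
    set U := encI (trunc hn e) with hU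
    have hT : enc2 hn e = insert (repS hn e) U := by
      rw [enc2, if_pos hr]
      rfl
    have hUle : ∀ x ∈ U, (x:ℕ) < ((repS hn e : Fin n) : ℕ) := by
      intro x hx
      have h1 := encI_le_p hsnice haP hamax _ hx
      rw [Fin.le_def] at h1
      rw [Fin.lt_def] at has
      omega
    have hUpos : ∀ x ∈ U, 0 < (x:ℕ) := encI_pos _ hsnice.1
    have hcond : ¬∃ x ∈ enc2 hn e, (x:ℕ) = 0 := by
      rintro ⟨x, hx, hx0⟩
      rw [hT] at hx
      rcases Finset.mem_insert.1 hx with rfl | hx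
      · rw [Fin.lt_def] at has; omega
      · have := hUpos x hx; omega
    have hsT : repS hn e ∈ enc2 hn e := by rw [hT]; exact Finset.mem_insert_self _ _
    have hMax : Mval (enc2 hn e) = ((repS hn e : Fin n) : ℕ) := by
      have h1 := le_Mval hsT
      obtain ⟨x0, hx0, hmv⟩ := Mval_mem (T := enc2 hn e) ⟨_, hsT⟩
      rw [hT] at hx0
      rcases Finset.mem_insert.1 hx0 with rfl | hx0
      · omega
      · have := hUle x0 hx0; omega
    have hfil : (enc2 hn e).filter (fun x : Fin n => (x:ℕ) < Mval (enc2 hn e)) = U := by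
      ext x
      rw [Finset.mem_filter, hMax, hT, Finset.mem_insert]
      constructor
      · rintro ⟨rfl | hx, hlt⟩
        · omega
        · exact hx
      · intro hx
        exact ⟨Or.inr hx, hUle x hx⟩
    have hdecU : decS U = trunc hn e := decS_encI hsnice
    have hmvU : mval U = e a := by
      rw [hU, mval_encI hsnice haP hamax, trunc]
      rw [if_pos (by rw [Fin.lt_def] at has; exact has)]
    funext i
    show (if (∃ x ∈ enc2 hn e, (x:ℕ) = 0) then _ else _) = e i
    rw [if_neg hcond, hfil, hdecU, hMax]
    by_cases hi : (i:ℕ) < ((repS hn e : Fin n) : ℕ)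
    · rw [if_pos hi, trunc, if_pos hi]
    · rw [if_neg hi, hmvU, hav]
      exact (rep_tail hn he hr i (by rw [Fin.le_def]; omega)).symm
  · -- strict case
    have hsnice := p2_snice_of_not_rep he hr
    have hT : enc2 hn e = insert ⟨0, hn⟩ (encI e) := by rw [enc2, if_neg hr]
    have hcond : ∃ x ∈ enc2 hn e, (x:ℕ) = 0 := by
      rw [hT]; exact ⟨⟨0, hn⟩, Finset.mem_insert_self _ _, rfl⟩
    have hfil : (enc2 hn e).filter (fun x : Fin n => 0 < (x:ℕ)) = encI e := by
      ext x
      rw [Finset.mem_filter, hT, Finset.mem_insert]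
      constructor
      · rintro ⟨rfl | hx, hpos⟩
        · simp at hpos
        · exact hx
      · intro hx
        exact ⟨Or.inr hx, encI_pos _ hsnice.1 x hx⟩
    funext i
    show (if (∃ x ∈ enc2 hn e, (x:ℕ) = 0) then _ else _) = e i
    rw [if_pos hcond, hfil, decS_encI hsnice]



section DecodeSide
variable {T : Finset (Fin n)}

/-- evaluation lemma for dec2 in the no-zero branch -/
lemma dec2_eval_rep (hT0 : ¬∃ x ∈ T, (x:ℕ) = 0) (i : Fin n) :
    dec2 T i = if (i:ℕ) < Mval T then decS (T.filter (fun x : Fin n => (x:ℕ) < Mval T)) i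
               else mval (T.filter (fun x : Fin n => (x:ℕ) < Mval T)) := by
  show (if (∃ x ∈ T, (x:ℕ) = 0) then _ else _) = _
  rw [if_neg hT0]

lemma dec2_eval_strict (hT0 : ∃ x ∈ T, (x:ℕ) = 0) (i : Fin n) :
    dec2 T i = decS (T.filter (fun x : Fin n => 0 < (x:ℕ))) i := by
  show (if (∃ x ∈ T, (x:ℕ) = 0) then _ else _) = _
  rw [if_pos hT0]

-- ### decode side, repeated branch: T has no zero and card ≥ 2
section RepDecode
variable (hT0 : ¬∃ x ∈ T, (x:ℕ) = 0) (hc2 : 2 ≤ T.card)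

lemma rep_setup (hT0 : ¬∃ x ∈ T, (x:ℕ) = 0) (hc2 : 2 ≤ T.card) :
    ∃ hTne : T.Nonempty,
      Mval T = ((T.max' hTne : Fin n) : ℕ) ∧
      T.filter (fun x : Fin n => (x:ℕ) < Mval T) = T.erase (T.max' hTne) ∧
      (T.erase (T.max' hTne)).Nonempty ∧
      (∀ x ∈ T.erase (T.max' hTne), 0 < (x:ℕ)) := by
  have hTne : T.Nonempty := Finset.card_pos.1 (by omega)
  have hMv : Mval T = ((T.max' hTne : Fin n) : ℕ) := dif_pos hTne
  refine ⟨hTne, hMv, ?_, ?_, ?_⟩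
  · ext x
    rw [Finset.mem_filter, Finset.mem_erase, hMv]
    constructor
    · rintro ⟨hx, hlt⟩
      exact ⟨fun h => by rw [h] at hlt; omega, hx⟩
    · rintro ⟨hne, hx⟩
      refine ⟨hx, ?_⟩
      have h1 := T.le_max' x hx
      rw [Fin.le_def] at h1
      rcases eq_or_lt_of_le h1 with h | h
      · exact absurd (Fin.ext h) hne
      · exact h
  · obtain ⟨x, hx, hne⟩ := Finset.exists_mem_ne (s := T) (by omega) (T.max' hTne)
    exact ⟨x, Finset.mem_erase.2 ⟨hne, hx⟩⟩
  · intro x hx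
    have hxT := Finset.mem_of_mem_erase hx
    rcases Nat.eq_zero_or_pos (x:ℕ) with h | h
    · exact absurd ⟨x, hxT, h⟩ hT0
    · exact h

lemma dec2_P2_rep (hT0 : ¬∃ x ∈ T, (x:ℕ) = 0) (hc2 : 2 ≤ T.card) : P2 (dec2 T) := by
  obtain ⟨hTne, hMv, hfil, hUne, hUpos⟩ := rep_setup hT0 hc2
  set U := T.erase (T.max' hTne) with hUdef
  have heval : ∀ i : Fin n, dec2 T i =
      if (i:ℕ) < Mval T then decS U i else mval U := by
    intro i
    rw [dec2_eval_rep hT0, hfil]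
  have hUlt : ∀ x ∈ U, (x:ℕ) < Mval T := by
    intro x hx
    have hx' : x ∈ T.filter (fun x : Fin n => (x:ℕ) < Mval T) := by rw [hfil]; exact hx
    exact (Finset.mem_filter.1 hx').2
  have hmvU_le : ∀ {i : Fin n}, 0 < decS U i → mval U ≤ decS U i := by
    intro i hi
    obtain ⟨x, hx, hv⟩ := decS_val_mem hi
    rw [hv]
    exact mval_le hx
  refine ⟨?_, ?_, ?_⟩
  · intro i
    rw [heval i]
    split
    · exact decS_le i
    · next h =>
      obtain ⟨x0, hx0, hv0⟩ := mval_mem hUne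
      have := hUlt x0 hx0
      omega
  · -- C1'
    intro j k hjk hj
    rw [heval j] at hj ⊢
    rw [heval k]
    by_cases hjlt : (j:ℕ) < Mval T
    · rw [if_pos hjlt] at hj ⊢
      by_cases hklt : (k:ℕ) < Mval T
      · rw [if_pos hklt]
        rcases Nat.eq_zero_or_pos (decS U k) with h | h
        · omega
        · exact le_of_lt (decS_anti hUpos hjk hj h)
      · rw [if_neg hklt]
        exact hmvU_le hj
    · rw [if_neg hjlt] at hj ⊢
      by_cases hklt : (k:ℕ) < Mval T
      · exfalso
        rw [Fin.lt_def] at hjk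
        omega
      · rw [if_neg hklt]
  · -- C2'
    intro i j k hij hjk hi hv
    rw [heval i] at hi hv ⊢
    rw [heval j] at hv
    rw [heval k]
    by_cases hilt : (i:ℕ) < Mval T
    · rw [if_pos hilt] at hi hv ⊢
      by_cases hjlt : (j:ℕ) < Mval T
      · rw [if_pos hjlt] at hv
        exact absurd (decS_anti hUpos hij hi (by omega)) (by omega)
      · rw [if_neg hjlt] at hv
        by_cases hklt : (k:ℕ) < Mval T
        · exfalso
          rw [Fin.lt_def] at hjk
          omega
        · rw [if_neg hklt]
          omega
    · rw [if_neg hilt] at hi hv ⊢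
      by_cases hklt : (k:ℕ) < Mval T
      · exfalso
        rw [Fin.lt_def] at hij hjk
        omega
      · rw [if_neg hklt]

lemma enc2_dec2_rep (hn : 0 < n) (hT0 : ¬∃ x ∈ T, (x:ℕ) = 0) (hc2 : 2 ≤ T.card) :
    enc2 hn (dec2 T) = T := by
  obtain ⟨hTne, hMv, hfil, hUne, hUpos⟩ := rep_setup hT0 hc2
  set U := T.erase (T.max' hTne) with hUdef
  have heval : ∀ i : Fin n, dec2 T i =
      if (i:ℕ) < Mval T then decS U i else mval U := by
    intro i
    rw [dec2_eval_rep hT0, hfil]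
  have hUlt : ∀ x ∈ U, (x:ℕ) < Mval T := by
    intro x hx
    have hx' : x ∈ T.filter (fun x : Fin n => (x:ℕ) < Mval T) := by rw [hfil]; exact hx
    exact (Finset.mem_filter.1 hx').2
  set b := T.max' hTne with hb
  set a := U.max' hUne with ha
  have haU : a ∈ U := U.max'_mem hUne
  have halt : (a:ℕ) < Mval T := hUlt a haU
  have hea : dec2 T a = mval U := by
    rw [heval a, if_pos halt]
    exact decS_max U hUne
  have heb : dec2 T b = mval U := by
    rw [heval b, if_neg (by omega)]
  have hmvpos : 0 < mval U := by
    obtain ⟨x0, hx0, hv0⟩ := mval_mem hUne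
    have := hUpos x0 hx0
    omega
  have hab : a < b := by
    rw [Fin.lt_def]; omega
  have hrep : hasRep (dec2 T) := ⟨a, b, hab, by omega, by rw [hea, heb]⟩
  -- the repeat position is b
  have hBne : (Finset.univ.filter
      (fun c : Fin n => ∃ x, x < c ∧ 0 < dec2 T x ∧ dec2 T x = dec2 T c)).Nonempty := by
    refine ⟨b, ?_⟩
    simp only [Finset.mem_filter, Finset.mem_univ, true_and]
    exact ⟨a, hab, by omega, by rw [hea, heb]⟩
  have hrepS : repS hn (dec2 T) = b := by
    rw [repS, dif_pos hBne]
    apply le_antisymm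
    · apply Finset.min'_le
      simp only [Finset.mem_filter, Finset.mem_univ, true_and]
      exact ⟨a, hab, by omega, by rw [hea, heb]⟩
    · -- any element of the filter is ≥ b
      apply Finset.le_min'
      intro c hcmem
      simp only [Finset.mem_filter, Finset.mem_univ, true_and] at hcmem
      obtain ⟨x, hxc, hxpos, hxv⟩ := hcmem
      by_contra hbc
      push_neg at hbc
      -- c < b, so c and x are both in the strict part
      have hcb : (c:ℕ) < Mval T := by
        rw [Fin.lt_def] at hbc; omega
      have hxlt : (x:ℕ) < Mval T := by
        rw [Fin.lt_def] at hxc; omega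
      rw [heval x, if_pos hxlt] at hxpos hxv
      rw [heval c, if_pos hcb] at hxv
      have hcpos : 0 < decS U c := by omega
      have := decS_anti hUpos hxc hxpos hcpos
      omega
  have htr : trunc hn (dec2 T) = decS U := by
    funext i
    rw [trunc, hrepS]
    by_cases hi : (i:ℕ) < (b:ℕ)
    · rw [if_pos hi, heval i, if_pos (by omega)]
    · rw [if_neg hi]
      have : i ∉ U := by
        intro hiU
        have := hUlt i hiU
        omega
      exact (decS_of_not_mem this).symm
  rw [enc2, if_pos hrep]
  rw [show (fun i : Fin n => if (i:ℕ) < ((repS hn (dec2 T) : Fin n) : ℕ)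
      then dec2 T i else 0) = trunc hn (dec2 T) from rfl]
  rw [htr, hrepS, encI_decS U hUpos]
  -- insert b U = T
  ext x
  rw [Finset.mem_insert, Finset.mem_erase]
  constructor
  · rintro (rfl | ⟨_, hx⟩)
    · exact T.max'_mem hTne
    · exact hx
  · intro hx
    rcases eq_or_ne x b with rfl | hne
    · exact Or.inl rfl
    · exact Or.inr ⟨hne, hx⟩

end RepDecode

-- ### decode side, strict branch
lemma dec2_P2_strict (hT0 : ∃ x ∈ T, (x:ℕ) = 0) : P2 (dec2 T) := by
  have hUpos : ∀ x ∈ T.filter (fun x : Fin n => 0 < (x:ℕ)), 0 < (x:ℕ) := by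
    intro x hx
    exact (Finset.mem_filter.1 hx).2
  have hsn : SNice (dec2 T) := by
    have := decS_SNice _ hUpos
    constructor
    · intro i; rw [dec2_eval_strict hT0]; exact this.1 i
    · intro i j hij hi hj
      rw [dec2_eval_strict hT0 i] at hi ⊢
      rw [dec2_eval_strict hT0 j] at hj ⊢
      exact this.2 i j hij hi hj
  exact snice_P2 hsn

lemma enc2_dec2_strict (hn : 0 < n) (hT0 : ∃ x ∈ T, (x:ℕ) = 0) :
    enc2 hn (dec2 T) = T := by
  have hUpos : ∀ x ∈ T.filter (fun x : Fin n => 0 < (x:ℕ)), 0 < (x:ℕ) := by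
    intro x hx
    exact (Finset.mem_filter.1 hx).2
  have hdec : dec2 T = decS (T.filter (fun x : Fin n => 0 < (x:ℕ))) :=
    funext (fun i => dec2_eval_strict hT0 i)
  have hsn : SNice (dec2 T) := by
    rw [hdec]; exact decS_SNice _ hUpos
  have hz : (⟨0, hn⟩ : Fin n) ∈ T := by
    obtain ⟨x, hx, hx0⟩ := hT0
    have : x = ⟨0, hn⟩ := Fin.ext hx0
    rw [← this]; exact hx
  rw [enc2, if_neg (snice_not_hasRep hsn), hdec, encI_decS _ hUpos]
  ext x
  rw [Finset.mem_insert, Finset.mem_filter]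
  constructor
  · rintro (rfl | ⟨hx, _⟩)
    · exact hz
    · exact hx
  · intro hx
    rcases Nat.eq_zero_or_pos (x:ℕ) with h | h
    · exact Or.inl (Fin.ext h)
    · exact Or.inr ⟨hx, h⟩

end DecodeSide

lemma dec2_P2 {T : Finset (Fin n)} (hD : D2P T) : P2 (dec2 T) := by
  by_cases hT0 : ∃ x ∈ T, (x:ℕ) = 0
  · exact dec2_P2_strict hT0
  · rcases hD with h | h
    · exact absurd h hT0
    · exact dec2_P2_rep hT0 h

lemma enc2_dec2 {T : Finset (Fin n)} (hn : 0 < n) (hD : D2P T) : enc2 hn (dec2 T) = T := by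
  by_cases hT0 : ∃ x ∈ T, (x:ℕ) = 0
  · exact enc2_dec2_strict hn hT0
  · rcases hD with h | h
    · exact absurd h hT0
    · exact enc2_dec2_rep hn hT0 h

lemma count_D2P (hn : 0 < n) : Nat.card {T : Finset (Fin n) // D2P T} = 2 ^ n - n := by
  classical
  rw [Nat.card_eq_fintype_card, Fintype.card_subtype]
  have h1 : (Finset.univ.filter (fun T : Finset (Fin n) => ¬ D2P T)).card = n := by
    have himg : (Finset.univ.filter (fun T : Finset (Fin n) => ¬ D2P T)) =
        Finset.univ.image (fun i : Fin n =>
          if (i:ℕ) = 0 then (∅ : Finset (Fin n)) else {i}) := by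
      ext T
      simp only [Finset.mem_filter, Finset.mem_univ, true_and, Finset.mem_image]
      simp only [D2P]
      constructor
      · intro hT
        push_neg at hT
        obtain ⟨hT0, hcard⟩ := hT
        interval_cases hc : T.card
        · exact ⟨⟨0, hn⟩, by rw [if_pos rfl, eq_comm, ← Finset.card_eq_zero]; exact hc⟩
        · obtain ⟨a, rfl⟩ := Finset.card_eq_one.1 hc
          have ha : (a:ℕ) ≠ 0 := fun h => hT0 a (Finset.mem_singleton_self a) h
          exact ⟨a, by rw [if_neg ha]⟩
      · rintro ⟨i, rfl⟩
        split
        · push_neg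
          constructor
          · intro x hx
            simp at hx
          · simp
        · next hi =>
          push_neg
          constructor
          · intro x hx
            rw [Finset.mem_singleton] at hx
            rw [hx]
            exact hi
          · simp
    rw [himg]
    rw [Finset.card_image_of_injective]
    · simp
    · intro i j hij
      have hij' : (if (i:ℕ) = 0 then (∅ : Finset (Fin n)) else {i})
          = (if (j:ℕ) = 0 then (∅ : Finset (Fin n)) else {j}) := hij
      clear hij
      rename' hij' => hij
      by_cases hi : (i:ℕ) = 0 <;> by_cases hj : (j:ℕ) = 0
      · exact Fin.ext (by omega)
      · rw [if_pos hi, if_neg hj] at hij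
        exact absurd hij.symm (Finset.singleton_ne_empty j)
      · rw [if_neg hi, if_pos hj] at hij
        exact absurd hij (Finset.singleton_ne_empty i)
      · rw [if_neg hi, if_neg hj] at hij
        exact Finset.singleton_injective hij
  have h2 := Finset.card_filter_add_card_filter_not
    (s := (Finset.univ : Finset (Finset (Fin n)))) (p := fun T => D2P T)
  have h3 : (Finset.univ : Finset (Finset (Fin n))).card = 2 ^ n := by
    rw [Finset.card_univ, Fintype.card_finset, Fintype.card_fin]
  have h4 : n ≤ 2 ^ n := Nat.le_of_lt (Nat.lt_two_pow_self (n := n))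
  omega

lemma count_P2 (hn : 0 < n) : Nat.card {e : Fin n → ℕ // P2 e} = 2 ^ n - n := by
  rw [← count_D2P hn]
  exact (Nat.card_eq_of_bijective
    (f := fun T : {T : Finset (Fin n) // D2P T} =>
      (⟨dec2 T.1, dec2_P2 T.2⟩ : {e : Fin n → ℕ // P2 e}))
    ⟨by
      rintro ⟨T, hT⟩ ⟨T', hT'⟩ h
      simp only [Subtype.mk.injEq] at h
      apply Subtype.ext
      have := congrArg (enc2 hn) h
      rwa [enc2_dec2 hn hT, enc2_dec2 hn hT'] at this,
     by
      rintro ⟨e, he⟩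
      exact ⟨⟨enc2 hn e, enc2_D2P hn he⟩, Subtype.ext (dec2_enc2 hn he)⟩⟩).symm


end InvProof

theorem stmt_4 (n : ℕ) (hn : 1 ≤ n) (p q : List ℕ)
    (hpq : (p, q) = ([0,1,2], [0,2,1]) ∨ (p, q) = ([1,1,0], [0,1,2])) :
    Nat.card {e : Fin n → ℕ // InvSeq e ∧ Avoids e p ∧ Avoids e q}
      = 2 ^ n - n := by
  have hn' : 0 < n := hn
  rcases hpq with h | h
  · have hp : p = [0,1,2] := congrArg Prod.fst h
    have hq : q = [0,2,1] := congrArg Prod.snd h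
    subst hp; subst hq
    have hiff : ∀ e : Fin n → ℕ,
        (InvSeq e ∧ Avoids e [0,1,2] ∧ Avoids e [0,2,1]) ↔ P1 e := by
      intro e
      constructor
      · rintro ⟨h1, h2, h3⟩
        exact ⟨h1, (char1 hn' e h1).1 ⟨h2, h3⟩⟩
      · rintro ⟨h1, h2⟩
        obtain ⟨h3, h4⟩ := (char1 hn' e h1).2 h2
        exact ⟨h1, h3, h4⟩
    rw [Nat.card_congr (Equiv.subtypeEquivRight hiff)]
    exact count_P1
  · have hp : p = [1,1,0] := congrArg Prod.fst h
    have hq : q = [0,1,2] := congrArg Prod.snd h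
    subst hp; subst hq
    have hiff : ∀ e : Fin n → ℕ,
        (InvSeq e ∧ Avoids e [1,1,0] ∧ Avoids e [0,1,2]) ↔ P2 e := by
      intro e
      constructor
      · rintro ⟨h1, h2, h3⟩
        obtain ⟨c1, c2⟩ := (char2 hn' e h1).1 ⟨h2, h3⟩
        exact ⟨h1, c1, c2⟩
      · rintro ⟨h1, c1, c2⟩
        obtain ⟨h2, h3⟩ := (char2 hn' e h1).2 ⟨c1, c2⟩
        exact ⟨h1, h2, h3⟩
    rw [Nat.card_congr (Equiv.subtypeEquivRight hiff)]
    exact count_P2 hn'
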